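/- If n ≥ 2, then any collection of mutually unbiased orthonormal bases of C^n contains at most n+1 bases. -/

import Mathlib

open scoped ComplexConjugate

noncomputable def mubV (n : ℕ) (x : EuclideanSpace ℂ (Fin n)) :
    EuclideanSpace ℂ (Fin n × Fin n) :=
  WithLp.toLp 2 (fun p => conj (x p.1) * x p.2)

noncomputable def mubE (n : ℕ) : EuclideanSpace ℂ (Fin n × Fin n) :=
  WithLp.toLp 2 (fun p => if p.1 = p.2 then (1 : ℂ) else 0)

lemma mubV_inner (n : ℕ) (x y : EuclideanSpace ℂ (Fin n)) :
    (inner ℂ (mubV n x) (mubV n y) : ℂ)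
      = conj (inner ℂ x y : ℂ) * (inner ℂ x y : ℂ) := by
  classical
  simp only [PiLp.inner_apply, RCLike.inner_apply, map_sum, Finset.sum_mul_sum,
    Fintype.sum_prod_type, mubV, PiLp.toLp_apply]
  refine Finset.sum_congr rfl fun a _ => Finset.sum_congr rfl fun b _ => ?_
  simp only [map_mul, Complex.conj_conj]
  ring

lemma mubE_inner_mubV (n : ℕ) (x : EuclideanSpace ℂ (Fin n)) :
    (inner ℂ (mubE n) (mubV n x) : ℂ) = (inner ℂ x x : ℂ) := by
  classical
  simp only [PiLp.inner_apply, RCLike.inner_apply, Fintype.sum_prod_type, mubV, mubE, PiLp.toLp_apply]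
  simp [apply_ite (starRingEnd ℂ), ite_mul, Finset.sum_ite_eq, mul_comm]

lemma mubV_inner_mubE (n : ℕ) (x : EuclideanSpace ℂ (Fin n)) :
    (inner ℂ (mubV n x) (mubE n) : ℂ) = (inner ℂ x x : ℂ) := by
  classical
  simp only [PiLp.inner_apply, RCLike.inner_apply, Fintype.sum_prod_type, mubV, mubE, PiLp.toLp_apply]
  simp [mul_ite, Finset.sum_ite_eq, mul_comm]

lemma mubE_inner_self (n : ℕ) : (inner ℂ (mubE n) (mubE n) : ℂ) = n := by
  classical
  simp only [PiLp.inner_apply, RCLike.inner_apply, Fintype.sum_prod_type, mubE, PiLp.toLp_apply]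
  simp [apply_ite (starRingEnd ℂ), ite_mul, Finset.sum_ite_eq]

theorem mub_upper_bound (n N : ℕ) (hn : 2 ≤ n)
    (B : Fin N → Fin n → EuclideanSpace ℂ (Fin n))
    (horth : ∀ t, Orthonormal ℂ (B t))
    (hmub : ∀ t t', t ≠ t' → ∀ i j,
      ‖(inner ℂ (B t i) (B t' j) : ℂ)‖ = 1 / Real.sqrt n) :
    N ≤ n + 1 := by
  classical
  have hn0 : (0:ℝ) < (n:ℝ) := by
    have : 0 < n := by omega
    exact_mod_cast this
  have hnC : (n:ℂ) ≠ 0 := by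
    exact_mod_cast (by omega : n ≠ 0)
  set m := n - 1 with hmdef
  have hm1 : m + 1 = n := by omega
  have hmpos : 0 < m := by omega
  have horthite : ∀ t i j, (inner ℂ (B t i) (B t j) : ℂ) = if i = j then 1 else 0 :=
    fun t => orthonormal_iff_ite.mp (horth t)
  have hK : ∀ t t' i j, (inner ℂ (mubV n (B t i)) (mubV n (B t' j)) : ℂ)
      = if t = t' then (if i = j then 1 else 0) else (n:ℂ)⁻¹ := by
    intro t t' i j
    rw [mubV_inner]
    by_cases h : t = t'
    · subst h
      rw [horthite]
      by_cases hij : i = j <;> simp [hij]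
    · have hnorm := hmub t t' h i j
      rw [RCLike.conj_mul, hnorm]
      simp only [h, if_false]
      have hr : ((1:ℝ)/Real.sqrt n)^2 = (n:ℝ)⁻¹ := by
        rw [div_pow, one_pow, Real.sq_sqrt hn0.le, one_div]
      rw [← RCLike.ofReal_pow, hr, RCLike.ofReal_inv, RCLike.ofReal_natCast]
  set w : Fin N → Fin n → EuclideanSpace ℂ (Fin n × Fin n) :=
    fun t i => mubV n (B t i) - (n:ℂ)⁻¹ • mubE n with hw
  have hBnorm : ∀ t i, (inner ℂ (B t i) (B t i) : ℂ) = 1 := by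
    intro t i; rw [horthite]; simp
  have hinvconj : (starRingEnd ℂ) ((n:ℂ)⁻¹) = (n:ℂ)⁻¹ := by
    rw [map_inv₀, Complex.conj_natCast]
  have hWW : ∀ t t' i j, (inner ℂ (w t i) (w t' j) : ℂ)
      = if t = t' then (if i = j then 1 else 0) - (n:ℂ)⁻¹ else 0 := by
    intro t t' i j
    simp only [hw, inner_sub_left, inner_sub_right, inner_smul_left, inner_smul_right,
      mubE_inner_mubV, mubV_inner_mubE, mubE_inner_self, hK, hBnorm, hinvconj]
    have hsimp : (n:ℂ)⁻¹ * (n:ℂ) = 1 := inv_mul_cancel₀ hnC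
    by_cases h : t = t' <;> simp only [h, if_true, if_false] <;> rw [hsimp] <;> ring
  have hWE : ∀ t i, (inner ℂ (w t i) (mubE n) : ℂ) = 0 := by
    intro t i
    simp only [hw, inner_sub_left, inner_smul_left, mubV_inner_mubE, mubE_inner_self,
      hBnorm, hinvconj]
    field_simp
    exact sub_self 1
  have hEW : ∀ t i, (inner ℂ (mubE n) (w t i) : ℂ) = 0 := by
    intro t i
    simp only [hw, inner_sub_right, inner_smul_right, mubE_inner_mubV, mubE_inner_self,
      hBnorm]
    field_simp
    exact sub_self 1
  set ι : Fin m → Fin n := fun i => Fin.castLE (by omega) i with hι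
  have hιinj : Function.Injective ι := fun a b hab => by
    simpa [hι, Fin.ext_iff] using hab
  set f : (Fin N × Fin m) ⊕ Unit → EuclideanSpace ℂ (Fin n × Fin n) :=
    fun x => Sum.elim (fun p => w p.1 (ι p.2)) (fun _ => mubE n) x with hf
  have hli : LinearIndependent ℂ f := by
    rw [Fintype.linearIndependent_iff]
    intro g hg
    have hinner : ∀ x, (∑ y, g y * (inner ℂ (f x) (f y) : ℂ)) = 0 := by
      intro x
      have h0 : (inner ℂ (f x) (∑ y, g y • f y) : ℂ) = 0 := by rw [hg, inner_zero_right]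
      rw [← h0, inner_sum]
      exact Finset.sum_congr rfl fun y _ => by rw [inner_smul_right]
    have hge : g (Sum.inr ()) = 0 := by
      have h := hinner (Sum.inr ())
      rw [Fintype.sum_sum_type] at h
      simp only [hf, Sum.elim_inl, Sum.elim_inr, hEW, mul_zero, Finset.sum_const_zero,
        zero_add, mubE_inner_self, Finset.univ_unique, Finset.sum_singleton] at h
      have : g (Sum.inr ()) * (n:ℂ) = 0 := by
        simpa using h
      exact (mul_eq_zero.mp this).resolve_right hnC
    have hblock : ∀ (t : Fin N) (j : Fin m), g (Sum.inl (t, j)) = 0 := by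
      intro t j
      have key : ∀ j : Fin m, g (Sum.inl (t, j))
          = (n:ℂ)⁻¹ * ∑ i : Fin m, g (Sum.inl (t, i)) := by
        intro j
        have h := hinner (Sum.inl (t, j))
        rw [Fintype.sum_sum_type] at h
        simp only [hf, Sum.elim_inl, Sum.elim_inr, hWE, mul_zero, Finset.sum_const_zero,
          add_zero, hWW] at h
        rw [Fintype.sum_prod_type] at h
        have hterm : ∀ t' : Fin N,
            (∑ i : Fin m, g (Sum.inl (t', i)) *
              (if t = t' then (if ι j = ι i then 1 else 0) - (n:ℂ)⁻¹ else 0))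
            = if t = t' then g (Sum.inl (t', j))
                - (n:ℂ)⁻¹ * ∑ i : Fin m, g (Sum.inl (t', i)) else 0 := by
          intro t'
          by_cases ht : t = t'
          · simp only [ht, if_true, hιinj.eq_iff]
            rw [Finset.sum_congr rfl (fun i _ => mul_sub _ _ _), Finset.sum_sub_distrib]
            congr 1
            · rw [Finset.sum_congr rfl (fun i _ => by rw [mul_ite, mul_one, mul_zero])]
              simp [Finset.sum_ite_eq]
            · rw [Finset.mul_sum]
              exact Finset.sum_congr rfl fun i _ => mul_comm _ _
          · simp [ht]
        rw [Finset.sum_congr rfl (fun t' _ => hterm t')] at h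
        rw [Finset.sum_ite_eq, if_pos (Finset.mem_univ t)] at h
        linear_combination h
      set S : ℂ := ∑ i : Fin m, g (Sum.inl (t, i)) with hS
      have hSsum : S = (m:ℂ) * ((n:ℂ)⁻¹ * S) := by
        calc S = ∑ i : Fin m, g (Sum.inl (t, i)) := hS
        _ = ∑ _i : Fin m, (n:ℂ)⁻¹ * S := Finset.sum_congr rfl fun i _ => key i
        _ = (m:ℂ) * ((n:ℂ)⁻¹ * S) := by rw [Finset.sum_const]; simp [mul_comm]
      have hS0 : S = 0 := by
        have h2 : (n:ℂ) * S = (m:ℂ) * S := by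
          calc (n:ℂ) * S = (n:ℂ) * ((m:ℂ) * ((n:ℂ)⁻¹ * S)) := by rw [← hSsum]
          _ = ((n:ℂ) * (n:ℂ)⁻¹) * ((m:ℂ) * S) := by ring
          _ = (m:ℂ) * S := by rw [mul_inv_cancel₀ hnC, one_mul]
        have hc : ((m:ℕ):ℂ) + 1 = ((n:ℕ):ℂ) := by exact_mod_cast hm1
        have h3 : ((n:ℂ) - (m:ℂ)) * S = 0 := by linear_combination h2
        have h4 : (n:ℂ) - (m:ℂ) = 1 := by linear_combination -hc
        rw [h4, one_mul] at h3
        exact h3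
      rw [key j, hS0, mul_zero]
    intro x
    cases x with
    | inl p => exact hblock p.1 p.2
    | inr u => cases u; exact hge
  have hcard := hli.fintype_card_le_finrank
  rw [finrank_euclideanSpace] at hcard
  simp only [Fintype.card_sum, Fintype.card_prod, Fintype.card_fin,
    Fintype.card_unit] at hcard
  have h1 : N * m + 1 ≤ n * n := hcard
  have h2 : N * m ≤ (m + 2) * m := by nlinarith
  have h3 : N ≤ m + 2 := Nat.le_of_mul_le_mul_right h2 hmpos
  omega
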